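/- Let n ≥ 1, let G₁ = (Fin n, A₁) and G₂ = (Fin n, A₂) be connected graphs (self-loops allowed) with adjacency matrices M₁, M₂, and let M be the (2n)×(2n) block-diagonal matrix with blocks M₁ and M₂. Suppose π is a permutation of Fin (2n), with permutation matrix P, such that Pᵀ · M · P = I₂ ⊗ₖ B for some n×n 0-1 matrix B. Then π maps the set {i : Fin (2n) | (i : ℕ) < n} bijectively onto either {i | (i : ℕ) < n} or onto {i | n ≤ (i : ℕ)}; in particular each of G₁ and G₂ is isomorphic to the graph on Fin n with adjacency matrix B. -/

import Mathlib

open Kronecker Matrix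

/-- Graph isomorphism between adjacency relations. -/
def IsIso {V₁ : Type*} {V₂ : Type*} (A₁ : V₁ → V₁ → Prop) (A₂ : V₂ → V₂ → Prop) : Prop :=
  ∃ e : V₁ ≃ V₂, ∀ u v, A₁ u v ↔ A₂ (e u) (e v)

/-- Connectedness: the reflexive-transitive closure relates every pair of vertices. -/
def Conn {V : Type*} (A : V → V → Prop) : Prop :=
  ∀ u v : V, Relation.ReflTransGen A u v

/-- Adjacency matrix (over ℕ) of an adjacency relation on `Fin n`:
the `(u,v)` entry is `1` if `A u v` and `0` otherwise. -/
noncomputable def adjMat {n : ℕ} (A : Fin n → Fin n → Prop) : Matrix (Fin n) (Fin n) ℕ :=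
  Matrix.of fun u v => @ite ℕ (A u v) (Classical.propDecidable _) 1 0

/-- The `(2n)×(2n)` block-diagonal matrix with diagonal blocks `M₁`, `M₂`
(the adjacency matrix of a disjoint union). -/
def blockDiag2 {n : ℕ} (M₁ M₂ : Matrix (Fin n) (Fin n) ℕ) :
    Matrix (Fin (2 * n)) (Fin (2 * n)) ℕ :=
  (Matrix.fromBlocks M₁ 0 0 M₂).submatrix
    (fun i => finSumFinEquiv.symm (Fin.cast (two_mul n) i))
    (fun j => finSumFinEquiv.symm (Fin.cast (two_mul n) j))

/-- The Kronecker product of a `2×2` matrix with an `n×n` matrix, reindexed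
as a `(2n)×(2n)` matrix. -/
def kron2 {n : ℕ} (A : Matrix (Fin 2) (Fin 2) ℕ) (B : Matrix (Fin n) (Fin n) ℕ) :
    Matrix (Fin (2 * n)) (Fin (2 * n)) ℕ :=
  (A ⊗ₖ B).submatrix (fun i => finProdFinEquiv.symm i) (fun j => finProdFinEquiv.symm j)

/-- A 0-1 matrix: every entry is `0` or `1`. -/
def IsZeroOne {I : Type*} {J : Type*} (M : Matrix I J ℕ) : Prop :=
  ∀ i j, M i j = 0 ∨ M i j = 1

lemma perm_conj_apply {n : ℕ} (π : Equiv.Perm (Fin n)) (M : Matrix (Fin n) (Fin n) ℕ)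
    (i j : Fin n) :
    ((π.permMatrix ℕ)ᵀ * M * (π.permMatrix ℕ)) i j = M (π⁻¹ i) (π⁻¹ j) := by
  have ht : (π.permMatrix ℕ)ᵀ = (π⁻¹).permMatrix ℕ := by
    rw [Equiv.Perm.permMatrix, Equiv.Perm.permMatrix, ← PEquiv.toMatrix_symm,
      ← Equiv.toPEquiv_symm]
    rfl
  rw [ht, Equiv.Perm.permMatrix, Equiv.Perm.permMatrix, PEquiv.toMatrix_toPEquiv_mul,
    PEquiv.mul_toMatrix_toPEquiv]
  rfl

lemma adjMat_eq_one_iff {n : ℕ} (A : Fin n → Fin n → Prop) (u v : Fin n) :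
    adjMat A u v = 1 ↔ A u v := by
  by_cases h : A u v <;> simp [adjMat, h]

lemma kron2_one_apply {n : ℕ} (hn : 0 < n) (B : Matrix (Fin n) (Fin n) ℕ)
    (i j : Fin (2 * n)) :
    kron2 (1 : Matrix (Fin 2) (Fin 2) ℕ) B i j =
      if ((i : ℕ) < n ↔ (j : ℕ) < n) then
        B ⟨(i : ℕ) % n, Nat.mod_lt _ hn⟩ ⟨(j : ℕ) % n, Nat.mod_lt _ hn⟩
      else 0 := by
  have hdiv : ∀ k : Fin (2 * n), ((k : ℕ) / n) = if (k : ℕ) < n then 0 else 1 := by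
    intro k
    split_ifs with h
    · exact Nat.div_eq_of_lt h
    · exact Nat.div_eq_of_lt_le (by omega) (by have := k.2; omega)
  have : kron2 (1 : Matrix (Fin 2) (Fin 2) ℕ) B i j =
      (1 : Matrix (Fin 2) (Fin 2) ℕ) i.divNat j.divNat * B i.modNat j.modNat := by
    rfl
  rw [this]
  have hmod : i.modNat = (⟨(i : ℕ) % n, Nat.mod_lt _ hn⟩ : Fin n) := rfl
  have hmod' : j.modNat = (⟨(j : ℕ) % n, Nat.mod_lt _ hn⟩ : Fin n) := rfl
  by_cases h : ((i : ℕ) < n ↔ (j : ℕ) < n)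
  · have hd : i.divNat = j.divNat := by
      apply Fin.ext
      show (i : ℕ) / n = (j : ℕ) / n
      rw [hdiv, hdiv]
      by_cases hi : (i : ℕ) < n
      · rw [if_pos hi, if_pos (h.mp hi)]
      · rw [if_neg hi, if_neg (fun hj => hi (h.mpr hj))]
    rw [if_pos h, hd, Matrix.one_apply_eq, one_mul, hmod, hmod']
  · have hd : i.divNat ≠ j.divNat := by
      intro he
      apply h
      have := congrArg Fin.val he
      simp only [Fin.divNat] at this
      rw [hdiv, hdiv] at this
      constructor <;> intro hh <;> by_contra hc <;> simp [hh, hc] at this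
    rw [if_neg h, Matrix.one_apply_ne hd, zero_mul]

lemma blockDiag2_lt {n : ℕ} (M₁ M₂ : Matrix (Fin n) (Fin n) ℕ) (i j : Fin (2 * n))
    (hi : (i : ℕ) < n) (hj : (j : ℕ) < n) :
    blockDiag2 M₁ M₂ i j = M₁ ⟨i, hi⟩ ⟨j, hj⟩ := by
  unfold blockDiag2
  rw [Matrix.submatrix_apply]
  have h1 : finSumFinEquiv.symm (Fin.cast (two_mul n) i) = Sum.inl (⟨i, hi⟩ : Fin n) := by
    rw [Equiv.symm_apply_eq, finSumFinEquiv_apply_left]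
    exact Fin.ext rfl
  have h2 : finSumFinEquiv.symm (Fin.cast (two_mul n) j) = Sum.inl (⟨j, hj⟩ : Fin n) := by
    rw [Equiv.symm_apply_eq, finSumFinEquiv_apply_left]
    exact Fin.ext rfl
  rw [h1, h2, Matrix.fromBlocks_apply₁₁]

lemma blockDiag2_ge {n : ℕ} (M₁ M₂ : Matrix (Fin n) (Fin n) ℕ) (i j : Fin (2 * n))
    (hi : n ≤ (i : ℕ)) (hj : n ≤ (j : ℕ)) :
    blockDiag2 M₁ M₂ i j = M₂ ⟨(i : ℕ) - n, by have := i.2; omega⟩ ⟨(j : ℕ) - n, by have := j.2; omega⟩ := by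
  unfold blockDiag2
  rw [Matrix.submatrix_apply]
  have h1 : finSumFinEquiv.symm (Fin.cast (two_mul n) i)
      = Sum.inr (⟨(i : ℕ) - n, by have := i.2; omega⟩ : Fin n) := by
    rw [Equiv.symm_apply_eq, finSumFinEquiv_apply_right]
    exact Fin.ext (by show (i : ℕ) = n + ((i : ℕ) - n); omega)
  have h2 : finSumFinEquiv.symm (Fin.cast (two_mul n) j)
      = Sum.inr (⟨(j : ℕ) - n, by have := j.2; omega⟩ : Fin n) := by
    rw [Equiv.symm_apply_eq, finSumFinEquiv_apply_right]
    exact Fin.ext (by show (j : ℕ) = n + ((j : ℕ) - n); omega)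
  rw [h1, h2, Matrix.fromBlocks_apply₂₂]

/-- If `Pᵀ M P = I₂ ⊗ₖ B` where `M` is the block-diagonal matrix built
from the adjacency matrices of two connected graphs on `Fin n`, then the permutation `π`
maps `{i | i < n}` bijectively onto `{i | i < n}` or onto `{i | n ≤ i}`; in particular
each of the two graphs is isomorphic to the graph on `Fin n` with adjacency matrix `B`. -/
theorem stmt1 (n : ℕ) (hn : 1 ≤ n)
    (A₁ A₂ : Fin n → Fin n → Prop) (hs₁ : Symmetric A₁) (hs₂ : Symmetric A₂)
    (hc₁ : Conn A₁) (hc₂ : Conn A₂)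
    (M₁ M₂ : Matrix (Fin n) (Fin n) ℕ)
    (hM₁ : M₁ = adjMat A₁) (hM₂ : M₂ = adjMat A₂)
    (M : Matrix (Fin (2 * n)) (Fin (2 * n)) ℕ) (hM : M = blockDiag2 M₁ M₂)
    (π : Equiv.Perm (Fin (2 * n))) (B : Matrix (Fin n) (Fin n) ℕ) (hB : IsZeroOne B)
    (h : (π.permMatrix ℕ)ᵀ * M * (π.permMatrix ℕ) = kron2 (1 : Matrix (Fin 2) (Fin 2) ℕ) B) :
    (Set.BijOn π {i : Fin (2 * n) | (i : ℕ) < n} {i : Fin (2 * n) | (i : ℕ) < n} ∨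
     Set.BijOn π {i : Fin (2 * n) | (i : ℕ) < n} {i : Fin (2 * n) | n ≤ (i : ℕ)}) ∧
    IsIso A₁ (fun u v => B u v = 1) ∧ IsIso A₂ (fun u v => B u v = 1) := by
  have npos : 0 < n := hn
  -- the fundamental entrywise equation: M u v = K (π u) (π v)
  have E : ∀ u v : Fin (2 * n), M u v = kron2 1 B (π u) (π v) := by
    intro u v
    have := congrFun (congrFun h (π u)) (π v)
    rw [perm_conj_apply] at this
    simpa using this
  -- edges of M force the π-images to lie on the same kron side
  have step : ∀ u v : Fin (2 * n), M u v = 1 → (((π u : ℕ) < n) ↔ ((π v : ℕ) < n)) := by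
    intro u v huv
    by_contra hcon
    rw [E, kron2_one_apply npos, if_neg hcon] at huv
    exact one_ne_zero huv.symm
  have same_side : ∀ u v : Fin (2 * n),
      Relation.ReflTransGen (fun a b => M a b = 1) u v →
      (((π u : ℕ) < n) ↔ ((π v : ℕ) < n)) := by
    intro u v hr
    induction hr with
    | refl => exact Iff.rfl
    | tail _ hbc ih => exact ih.trans (step _ _ hbc)
  -- embeddings of the two copies
  set emb₁ : Fin n → Fin (2 * n) := fun u => ⟨(u : ℕ), by have := u.2; omega⟩ with hemb₁
  set emb₂ : Fin n → Fin (2 * n) := fun u => ⟨n + (u : ℕ), by have := u.2; omega⟩ with hemb₂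
  have conn₁ : ∀ u v : Fin n,
      Relation.ReflTransGen (fun a b => M a b = 1) (emb₁ u) (emb₁ v) := by
    intro u v
    refine Relation.ReflTransGen.lift emb₁ ?_ u v (hc₁ u v)
    intro a b hab
    show M (emb₁ a) (emb₁ b) = 1
    rw [hM, blockDiag2_lt M₁ M₂ _ _ (a.2) (b.2)]
    have ha : (⟨(emb₁ a : ℕ), a.2⟩ : Fin n) = a := Fin.ext rfl
    have hb : (⟨(emb₁ b : ℕ), b.2⟩ : Fin n) = b := Fin.ext rfl
    rw [ha, hb, hM₁, adjMat_eq_one_iff]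
    exact hab
  have conn₂ : ∀ u v : Fin n,
      Relation.ReflTransGen (fun a b => M a b = 1) (emb₂ u) (emb₂ v) := by
    intro u v
    refine Relation.ReflTransGen.lift emb₂ ?_ u v (hc₂ u v)
    intro a b hab
    show M (emb₂ a) (emb₂ b) = 1
    rw [hM, blockDiag2_ge M₁ M₂ _ _ (by simp [hemb₂]) (by simp [hemb₂])]
    have ha : (⟨(emb₂ a : ℕ) - n, by have := (emb₂ a).2; omega⟩ : Fin n) = a :=
      Fin.ext (by show n + (a : ℕ) - n = (a : ℕ); omega)
    have hb : (⟨(emb₂ b : ℕ) - n, by have := (emb₂ b).2; omega⟩ : Fin n) = b :=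
      Fin.ext (by show n + (b : ℕ) - n = (b : ℕ); omega)
    rw [ha, hb, hM₂, adjMat_eq_one_iff]
    exact hab
  have side₁ : ∀ u v : Fin n, (((π (emb₁ u) : ℕ) < n) ↔ ((π (emb₁ v) : ℕ) < n)) :=
    fun u v => same_side _ _ (conn₁ u v)
  have side₂ : ∀ u v : Fin n, (((π (emb₂ u) : ℕ) < n) ↔ ((π (emb₂ v) : ℕ) < n)) :=
    fun u v => same_side _ _ (conn₂ u v)
  -- every index is emb₁ or emb₂ of something
  have cover : ∀ i : Fin (2 * n), (∃ u : Fin n, i = emb₁ u) ∨ (∃ u : Fin n, i = emb₂ u) := by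
    intro i
    by_cases hi : (i : ℕ) < n
    · exact Or.inl ⟨⟨i, hi⟩, Fin.ext rfl⟩
    · exact Or.inr ⟨⟨(i : ℕ) - n, by have := i.2; omega⟩,
        Fin.ext (by show (i : ℕ) = n + ((i : ℕ) - n); omega)⟩
  have z : Fin n := ⟨0, npos⟩
  -- the two sides are opposite
  have opp : ¬ (((π (emb₁ z) : ℕ) < n) ↔ ((π (emb₂ z) : ℕ) < n)) := by
    intro hiff
    by_cases hz : (π (emb₁ z) : ℕ) < n
    · -- everything maps below n: contradiction with surjectivity
      have hall : ∀ i : Fin (2 * n), (π i : ℕ) < n := by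
        intro i
        rcases cover i with ⟨u, hu⟩ | ⟨u, hu⟩
        · rw [hu]; exact (side₁ u z).mpr hz
        · rw [hu]; exact (side₂ u z).mpr (hiff.mp hz)
      have := hall (π.symm ⟨n, by omega⟩)
      simp at this
    · have hall : ∀ i : Fin (2 * n), ¬ (π i : ℕ) < n := by
        intro i
        rcases cover i with ⟨u, hu⟩ | ⟨u, hu⟩
        · rw [hu]; exact fun hc => hz ((side₁ u z).mp hc)
        · rw [hu]; exact fun hc => hz (hiff.mpr ((side₂ u z).mp hc))
      have := hall (π.symm ⟨0, by omega⟩)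
      simp [npos] at this
  -- component 1 : bijectivity statement
  have memD : ∀ i : Fin (2 * n), (i : ℕ) < n → ∃ u : Fin n, i = emb₁ u :=
    fun i hi => ⟨⟨i, hi⟩, Fin.ext rfl⟩
  have memC : ∀ i : Fin (2 * n), n ≤ (i : ℕ) → ∃ u : Fin n, i = emb₂ u :=
    fun i hi => ⟨⟨(i : ℕ) - n, by have := i.2; omega⟩,
      Fin.ext (by show (i : ℕ) = n + ((i : ℕ) - n); omega)⟩
  have hopp2 : ((π (emb₂ z) : ℕ) < n) ↔ ¬ ((π (emb₁ z) : ℕ) < n) := by tauto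
  have bij : (Set.BijOn π {i : Fin (2 * n) | (i : ℕ) < n} {i : Fin (2 * n) | (i : ℕ) < n} ∨
      Set.BijOn π {i : Fin (2 * n) | (i : ℕ) < n} {i : Fin (2 * n) | n ≤ (i : ℕ)}) := by
    by_cases hz : (π (emb₁ z) : ℕ) < n
    · left
      refine ⟨?_, π.injective.injOn, ?_⟩
      · intro i hi
        obtain ⟨u, rfl⟩ := memD i hi
        exact (side₁ u z).mpr hz
      · intro t ht
        refine ⟨π.symm t, ?_, by simp⟩
        by_contra hc
        simp only [Set.mem_setOf_eq, not_lt] at hc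
        obtain ⟨u, hu⟩ := memC _ hc
        have ht' : (π (π.symm t) : ℕ) < n := by simpa using ht
        rw [hu] at ht'
        have : (π (emb₂ z) : ℕ) < n := (side₂ u z).mp ht'
        exact (hopp2.mp this) hz
    · right
      refine ⟨?_, π.injective.injOn, ?_⟩
      · intro i hi
        obtain ⟨u, rfl⟩ := memD i hi
        simp only [Set.mem_setOf_eq]
        by_contra hc
        exact hz ((side₁ u z).mp (by omega))
      · intro t ht
        refine ⟨π.symm t, ?_, by simp⟩
        by_contra hc
        simp only [Set.mem_setOf_eq, not_lt] at hc
        obtain ⟨u, hu⟩ := memC _ hc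
        have ht' : n ≤ (π (π.symm t) : ℕ) := by simpa using ht
        rw [hu] at ht'
        have h2 : (π (emb₂ u) : ℕ) < n := (side₂ u z).mpr (hopp2.mpr hz)
        omega
  -- the two isomorphisms
  have mkIso : ∀ (A : Fin n → Fin n → Prop) (emb : Fin n → Fin (2 * n)),
      Function.Injective emb →
      (∀ u v : Fin n, (((π (emb u) : ℕ) < n) ↔ ((π (emb v) : ℕ) < n))) →
      (∀ u v : Fin n, M (emb u) (emb v) = adjMat A u v) →
      IsIso A (fun u v => B u v = 1) := by
    intro A emb hinj hside hadj
    set e : Fin n → Fin n := fun u => ⟨(π (emb u) : ℕ) % n, Nat.mod_lt _ npos⟩ with he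
    have key : ∀ u v : Fin n, adjMat A u v = B (e u) (e v) := by
      intro u v
      rw [← hadj, E, kron2_one_apply npos, if_pos (hside u v)]
    have einj : Function.Injective e := by
      intro u v huv
      have hval : (π (emb u) : ℕ) % n = (π (emb v) : ℕ) % n := congrArg Fin.val huv
      have hs := hside u v
      have hb1 := (π (emb u)).2
      have hb2 := (π (emb v)).2
      have : (π (emb u) : ℕ) = (π (emb v) : ℕ) := by
        by_cases hu : (π (emb u) : ℕ) < n
        · have hv := hs.mp hu
          rwa [Nat.mod_eq_of_lt hu, Nat.mod_eq_of_lt hv] at hval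
        · have hv := fun hc => hu (hs.mpr hc)
          have e1 : (π (emb u) : ℕ) % n = (π (emb u) : ℕ) - n := by
            rw [Nat.mod_eq_sub_mod (by omega), Nat.mod_eq_of_lt (by omega)]
          have e2 : (π (emb v) : ℕ) % n = (π (emb v) : ℕ) - n := by
            rw [Nat.mod_eq_sub_mod (by omega), Nat.mod_eq_of_lt (by omega)]
          omega
      exact hinj (π.injective (Fin.ext this))
    have main : ∀ u v : Fin n, A u v ↔ B (e u) (e v) = 1 := by
      intro u v
      have hk := key u v
      constructor
      · intro hA
        rw [← hk]
        exact (adjMat_eq_one_iff A u v).mpr hA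
      · intro hB1
        rw [← hk] at hB1
        exact (adjMat_eq_one_iff A u v).mp hB1
    refine ⟨Equiv.ofBijective e (Finite.injective_iff_bijective.mp einj), ?_⟩
    intro u v
    simpa using main u v
  have iso₁ : IsIso A₁ (fun u v => B u v = 1) := by
    refine mkIso A₁ emb₁ ?_ side₁ ?_
    · intro a b hab
      have h' := congrArg Fin.val hab
      exact Fin.ext h'
    · intro u v
      rw [hM, blockDiag2_lt M₁ M₂ _ _ u.2 v.2, hM₁]
  have iso₂ : IsIso A₂ (fun u v => B u v = 1) := by
    refine mkIso A₂ emb₂ ?_ side₂ ?_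
    · intro a b hab
      have := congrArg Fin.val hab
      simp only [hemb₂] at this
      exact Fin.ext (by omega)
    · intro u v
      rw [hM, blockDiag2_ge M₁ M₂ _ _ (by simp [hemb₂]) (by simp [hemb₂]), hM₂]
      congr 1 <;> exact Fin.ext (by simp [hemb₂])
  exact ⟨bij, iso₁, iso₂⟩
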